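/- Let E be a nilpotent evolution algebra over a quadratically closed field K of characteristic ≠ 2 whose annihilator is one-dimensional, with strictly upper triangular structure matrix relative to a natural basis. If some first-superdiagonal entry of the structure matrix vanishes (i.e., E does not have maximum index of nilpotency), then there exist scalars α_1,...,α_{n-1} ∈ K, not all zero, with α_1 e_1^2 + ... + α_{n-1} e_{n-1}^2 = 0, and consequently √α_1 e_1 + ... + √α_{n-1} e_{n-1} is an absolute nilpotent element of E not in the annihilator; hence E is not modular. -/

import Mathlib

open Submodule

variable {K : Type} [Field K] {E : Type} [AddCommGroup E] [Module K E]

/-- The product of two submodules under a bilinear multiplication. -/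
def mulSet (μ : E →ₗ[K] E →ₗ[K] E) (U V : Submodule K E) : Submodule K E :=
  Submodule.span K {z | ∃ u ∈ U, ∃ v ∈ V, z = μ u v}

/-- Derived series starting from a submodule: `dser μ I 0 = I`,
`dser μ I (k+1) = (dser μ I k)·(dser μ I k)`.  Thus `dser μ ⊤ (k-1) = E^(k)`. -/
def dser (μ : E →ₗ[K] E →ₗ[K] E) (I : Submodule K E) : ℕ → Submodule K E
  | 0 => I
  | k + 1 => mulSet μ (dser μ I k) (dser μ I k)

/-- Lower central-type series: `lowerPow μ k = E^(k+1)` where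
`E^1 = E` and `E^(k+1) = Σ_{i=1}^k E^i E^(k+1-i)`. -/
def lowerPow (μ : E →ₗ[K] E →ₗ[K] E) : ℕ → Submodule K E
  | 0 => ⊤
  | k + 1 => ⨆ i : Fin (k + 1), mulSet μ (lowerPow μ i.1) (lowerPow μ (k - i.1))
  decreasing_by
  · exact i.2
  · omega

/-- A submodule closed under the multiplication. -/
def IsSubalg (μ : E →ₗ[K] E →ₗ[K] E) (U : Submodule K E) : Prop :=
  ∀ x ∈ U, ∀ y ∈ U, μ x y ∈ U

/-- A (two-sided) ideal. -/
def IsIdeal (μ : E →ₗ[K] E →ₗ[K] E) (I : Submodule K E) : Prop :=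
  ∀ x ∈ I, ∀ y : E, μ x y ∈ I ∧ μ y x ∈ I

/-- Subalgebra generated by a set. -/
def gen (μ : E →ₗ[K] E →ₗ[K] E) (s : Set E) : Submodule K E :=
  sInf {W | IsSubalg μ W ∧ s ⊆ W}

/-- Quasi-ideal: the subalgebra generated together with any subalgebra is the vector-space sum. -/
def QuasiIdeal (μ : E →ₗ[K] E →ₗ[K] E) (U : Submodule K E) : Prop :=
  IsSubalg μ U ∧ ∀ V : Submodule K E, IsSubalg μ V → gen μ (↑U ∪ ↑V) = U ⊔ V

/-- The subalgebra lattice is modular. -/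
def ModularLat (μ : E →ₗ[K] E →ₗ[K] E) : Prop :=
  ∀ U V W : Submodule K E, IsSubalg μ U → IsSubalg μ V → IsSubalg μ W → U ≤ W →
    gen μ (↑U ∪ ↑(V ⊓ W)) = gen μ (↑U ∪ ↑V) ⊓ W

/-- The subalgebra lattice is distributive. -/
def DistribLat (μ : E →ₗ[K] E →ₗ[K] E) : Prop :=
  ∀ U V W : Submodule K E, IsSubalg μ U → IsSubalg μ V → IsSubalg μ W →
    gen μ (↑U ∪ ↑(V ⊓ W)) = gen μ (↑U ∪ ↑V) ⊓ gen μ (↑U ∪ ↑W)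

/-- Supersolvable: a complete flag of ideals. -/
def Supersolvable (μ : E →ₗ[K] E →ₗ[K] E) : Prop :=
  ∃ I : ℕ → Submodule K E, (∀ i, IsIdeal μ (I i)) ∧ (∀ i, I i ≤ I (i + 1)) ∧
    (∀ i ≤ Module.finrank K E, Module.finrank K (I i) = i) ∧ I (Module.finrank K E) = ⊤

/-- Maximal subalgebra `A` of the subalgebra `B`. -/
def MaxIn (μ : E →ₗ[K] E →ₗ[K] E) (A B : Submodule K E) : Prop :=
  A ≤ B ∧ A ≠ B ∧ ∀ W : Submodule K E, IsSubalg μ W → A ≤ W → W ≤ B → W = A ∨ W = B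

lemma isSubalg_span (μ : E →ₗ[K] E →ₗ[K] E) (s : Set E)
    (h : ∀ a ∈ s, ∀ c ∈ s, μ a c ∈ Submodule.span K s) :
    IsSubalg μ (Submodule.span K s) := by
  have h1 : ∀ a ∈ s, ∀ y ∈ Submodule.span K s, μ a y ∈ Submodule.span K s := by
    intro a ha y hy
    induction hy using Submodule.span_induction with
    | mem z hz => exact h a ha z hz
    | zero => simp
    | add y z _ _ hy hz => rw [map_add]; exact Submodule.add_mem _ hy hz
    | smul c y _ hy => rw [map_smul]; exact Submodule.smul_mem _ _ hy
  intro x hx y hy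
  induction hx using Submodule.span_induction with
  | mem z hz => exact h1 z hz y hy
  | zero => simp
  | add x z _ _ hx hz => rw [map_add, LinearMap.add_apply]; exact add_mem hx hz
  | smul c x _ hx => rw [map_smul, LinearMap.smul_apply]; exact Submodule.smul_mem _ _ hx

lemma exists_dep {a c : ℕ} (hac : c < a) (f : Fin a → (Fin c → K)) :
    ∃ g : Fin a → K, ∑ j, g j • f j = 0 ∧ ∃ j, g j ≠ 0 := by
  apply Fintype.not_linearIndependent_iff.1
  intro hli
  have hcard := hli.fintype_card_le_finrank
  rw [Module.finrank_fin_fun, Fintype.card_fin] at hcard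
  omega

/-- let `E` be a nilpotent evolution algebra over a quadratically closed
field of characteristic ≠ 2 with one-dimensional annihilator (exactly one basis vector
squares to zero) and strictly upper triangular structure matrix.  If some
first-superdiagonal entry vanishes, then some nontrivial combination
`α₁e₁² + ⋯ + α_{n-1}e_{n-1}² = 0` exists, `√α₁ e₁ + ⋯ + √α_{n-1} e_{n-1}` is an
absolute nilpotent element outside the annihilator, and `E` is not modular. -/
theorem stmt16 {n : ℕ} (h2 : (2 : K) ≠ 0) (hqc : ∀ a : K, ∃ c : K, c ^ 2 = a)
    (μ : E →ₗ[K] E →ₗ[K] E)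
    (hcomm : ∀ x y : E, μ x y = μ y x)
    (b : Module.Basis (Fin n) K E)
    (hnat : ∀ i j : Fin n, i ≠ j → μ (b i) (b j) = 0)
    (hupper : ∀ i k : Fin n, k ≤ i → b.repr (μ (b i) (b i)) k = 0)
    (hann : ∃! i : Fin n, μ (b i) (b i) = 0)
    (hzero : ∃ i : ℕ, ∃ h : i + 1 < n,
      b.repr (μ (b ⟨i, by omega⟩) (b ⟨i, by omega⟩)) ⟨i + 1, h⟩ = 0) :
    (∃ α : Fin (n - 1) → K, α ≠ 0 ∧
      (∑ i : Fin (n - 1), α i • μ (b ⟨i.1, by omega⟩) (b ⟨i.1, by omega⟩)) = 0 ∧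
      ∃ β : Fin (n - 1) → K, (∀ i, β i ^ 2 = α i) ∧
        μ (∑ i : Fin (n - 1), β i • b ⟨i.1, by omega⟩)
            (∑ i : Fin (n - 1), β i • b ⟨i.1, by omega⟩) = 0 ∧
        ∃ y : E, μ (∑ i : Fin (n - 1), β i • b ⟨i.1, by omega⟩) y ≠ 0) ∧
    ¬ ModularLat μ := by
  classical
  obtain ⟨ii, hii, hiz⟩ := hzero
  have hn2 : 2 ≤ n := by omega
  have hlt : ∀ j : Fin (n - 1), (j : ℕ) < n := fun j => by have := j.isLt; omega
  set sqv : Fin n → E := fun k => μ (b k) (b k) with hsqv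
  -- the last basis vector squares to zero
  have hlast : μ (b ⟨n - 1, by omega⟩) (b ⟨n - 1, by omega⟩) = 0 := by
    have h0 : b.repr (μ (b ⟨n - 1, by omega⟩) (b ⟨n - 1, by omega⟩)) = 0 := by
      ext k
      rw [Finsupp.coe_zero, Pi.zero_apply]
      exact hupper _ k (Fin.le_def.2 (show (k : ℕ) ≤ n - 1 by have := k.isLt; omega))
    exact (LinearEquiv.map_eq_zero_iff b.repr).1 h0
  -- all other basis vectors have nonzero square
  have hne : ∀ k : Fin n, (k : ℕ) < n - 1 → μ (b k) (b k) ≠ 0 := by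
    intro k hk hk0
    obtain ⟨i0, _, hu⟩ := hann
    have h1 := hu k hk0
    have h3 := hu ⟨n - 1, by omega⟩ hlast
    have h4 : (k : ℕ) = n - 1 := congrArg Fin.val (h1.trans h3.symm)
    omega
  -- the squares e_ii², ..., e_{n-2}² are linearly dependent
  obtain ⟨g, hg0, jg, hjg⟩ := exists_dep (a := n - 1 - ii) (c := n - 1 - ii - 1) (by omega)
    (fun j k =>
      b.repr (μ (b ⟨ii + j.1, by have := j.isLt; omega⟩) (b ⟨ii + j.1, by have := j.isLt; omega⟩))
        ⟨ii + 2 + k.1, by have := k.isLt; omega⟩)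
  -- key relation among the squares
  have key : ∑ j : Fin (n - 1 - ii), g j •
      μ (b ⟨ii + j.1, by have := j.isLt; omega⟩) (b ⟨ii + j.1, by have := j.isLt; omega⟩) = 0 := by
    apply b.repr.injective
    rw [map_zero, map_sum]
    ext k
    rw [Finsupp.coe_zero, Pi.zero_apply, Finsupp.finset_sum_apply]
    simp only [map_smul, Finsupp.smul_apply, smul_eq_mul]
    by_cases hk : (k : ℕ) < ii + 2
    · apply Finset.sum_eq_zero
      intro j _
      by_cases hj0 : (j : ℕ) = 0
      · by_cases hki : (k : ℕ) ≤ ii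
        · rw [hupper _ k (Fin.le_def.2 (show (k : ℕ) ≤ ii + (j : ℕ) by omega)), mul_zero]
        · have hkv : k = (⟨ii + 1, hii⟩ : Fin n) := Fin.ext (show (k : ℕ) = ii + 1 by have := k.isLt; omega)
          have hje : (⟨ii + j.1, by have := j.isLt; omega⟩ : Fin n) = ⟨ii, by omega⟩ :=
            Fin.ext (show ii + (j : ℕ) = ii by omega)
          rw [hkv, hje, hiz, mul_zero]
      · rw [hupper _ k (Fin.le_def.2 (show (k : ℕ) ≤ ii + (j : ℕ) by have := k.isLt; omega)), mul_zero]
    · have hcf := congrFun hg0 ⟨(k : ℕ) - (ii + 2), by have := k.isLt; omega⟩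
      rw [Finset.sum_apply, Pi.zero_apply] at hcf
      rw [← hcf]
      apply Finset.sum_congr rfl
      intro j _
      rw [Pi.smul_apply, smul_eq_mul]
      congr 1
      exact DFunLike.congr_arg _ (Fin.ext (show (k : ℕ) = ii + 2 + ((k : ℕ) - (ii + 2)) by omega))
  -- define α
  set G : ℕ → K := fun t => if h : t < n - 1 - ii then g ⟨t, h⟩ else 0 with hG
  have hGg : ∀ a : Fin (n - 1 - ii), G (a : ℕ) = g a := by
    intro a
    simp only [hG]
    rw [dif_pos a.isLt]
  set α : Fin (n - 1) → K := fun j => if ii ≤ (j : ℕ) then G ((j : ℕ) - ii) else 0 with hαdef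
  have hα0 : α ≠ 0 := by
    intro h
    apply hjg
    have hc := congrFun h ⟨ii + jg.1, by have := jg.isLt; omega⟩
    simp only [hαdef, Pi.zero_apply] at hc
    rw [if_pos (show ii ≤ ii + (jg : ℕ) by omega)] at hc
    rw [show ii + (jg : ℕ) - ii = (jg : ℕ) by omega, hGg] at hc
    exact hc
  have hemb : Function.Injective (fun a : Fin (n - 1 - ii) =>
      (⟨ii + (a : ℕ), by have := a.isLt; omega⟩ : Fin (n - 1))) := by
    intro a c h
    simp only [Fin.mk.injEq] at h
    exact Fin.ext (by omega)
  have hmap : Finset.univ.map ⟨_, hemb⟩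
      = Finset.univ.filter (fun j : Fin (n - 1) => ii ≤ (j : ℕ)) := by
    ext j
    simp only [Finset.mem_map, Finset.mem_univ, true_and, Finset.mem_filter,
      Function.Embedding.coeFn_mk]
    constructor
    · rintro ⟨a, rfl⟩
      show ii ≤ ii + (a : ℕ)
      omega
    · intro hj
      exact ⟨⟨(j : ℕ) - ii, by have := j.isLt; omega⟩, Fin.ext (show ii + ((j : ℕ) - ii) = (j : ℕ) by omega)⟩
  have hsum : ∑ j : Fin (n - 1), α j • μ (b ⟨j.1, hlt j⟩) (b ⟨j.1, hlt j⟩) = 0 := by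
    rw [← key]
    rw [← Finset.sum_filter_of_ne (p := fun j : Fin (n - 1) => ii ≤ (j : ℕ))
      (fun x _ hx => by
        by_contra hc
        apply hx
        simp only [hαdef]
        rw [if_neg hc, zero_smul])]
    rw [← hmap, Finset.sum_map]
    apply Finset.sum_congr rfl
    intro a _
    simp only [hαdef, Function.Embedding.coeFn_mk]
    rw [if_pos (show ii ≤ ii + (a : ℕ) by omega)]
    rw [show ii + (a : ℕ) - ii = (a : ℕ) by omega, hGg]
  -- square roots
  set β : Fin (n - 1) → K := fun j => Classical.choose (hqc (α j)) with hβdef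
  have hβ : ∀ j, β j ^ 2 = α j := fun j => Classical.choose_spec (hqc (α j))
  set x : E := ∑ j : Fin (n - 1), β j • b ⟨j.1, hlt j⟩ with hxdef
  have hexp : ∀ c d : Fin (n - 1) → K,
      μ (∑ j : Fin (n - 1), c j • b ⟨j.1, hlt j⟩) (∑ j : Fin (n - 1), d j • b ⟨j.1, hlt j⟩)
        = ∑ j : Fin (n - 1), (c j * d j) • μ (b ⟨j.1, hlt j⟩) (b ⟨j.1, hlt j⟩) := by
    intro c d
    have inner : ∀ xk : Fin (n - 1), μ (∑ j : Fin (n - 1), c j • b ⟨j.1, hlt j⟩) (b ⟨xk.1, hlt xk⟩)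
        = c xk • μ (b ⟨xk.1, hlt xk⟩) (b ⟨xk.1, hlt xk⟩) := by
      intro xk
      rw [map_sum, LinearMap.sum_apply]
      simp only [map_smul, LinearMap.smul_apply]
      rw [Finset.sum_eq_single xk (fun k _ hkj => by
        rw [hnat _ _ (fun hh => hkj (Fin.ext (show (k : ℕ) = (xk : ℕ) by have hq' := congrArg Fin.val hh; exact hq'))),
          smul_zero]) (by simp)]
    rw [map_sum]
    simp only [map_smul]
    calc ∑ k : Fin (n - 1), d k • μ (∑ j : Fin (n - 1), c j • b ⟨j.1, hlt j⟩) (b ⟨k.1, hlt k⟩)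
        = ∑ k : Fin (n - 1), d k • (c k • μ (b ⟨k.1, hlt k⟩) (b ⟨k.1, hlt k⟩)) :=
          Finset.sum_congr rfl fun k _ => by rw [inner k]
      _ = ∑ j : Fin (n - 1), (c j * d j) • μ (b ⟨j.1, hlt j⟩) (b ⟨j.1, hlt j⟩) :=
          Finset.sum_congr rfl fun k _ => by rw [smul_smul, mul_comm]
  have hxx : μ x x = 0 := by
    rw [hxdef, hexp, ← hsum]
    apply Finset.sum_congr rfl
    intro j _
    rw [← hβ j, sq]
  have hβex : ∃ j, β j ≠ 0 := by
    rcases Function.ne_iff.1 hα0 with ⟨j, hj⟩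
    simp only [Pi.zero_apply] at hj
    exact ⟨j, fun h => hj (by rw [← hβ j, h]; ring)⟩
  set S : Finset (Fin (n - 1)) := Finset.univ.filter (fun j => β j ≠ 0) with hS
  have hSne : S.Nonempty := by
    obtain ⟨j, hj⟩ := hβex
    exact ⟨j, by simp [hS, hj]⟩
  set jm : Fin (n - 1) := S.max' hSne with hjm
  have hjβ : β jm ≠ 0 := by
    have := S.max'_mem hSne
    simp only [hS, Finset.mem_filter] at this
    exact this.2
  have hjmax : ∀ k, β k ≠ 0 → k ≤ jm := fun k hk => S.le_max' k (by simp [hS, hk])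
  have hsq_ne : μ (b ⟨jm.1, hlt jm⟩) (b ⟨jm.1, hlt jm⟩) ≠ 0 := hne ⟨jm.1, hlt jm⟩ jm.isLt
  have hxbj : μ x (b ⟨jm.1, hlt jm⟩) = β jm • μ (b ⟨jm.1, hlt jm⟩) (b ⟨jm.1, hlt jm⟩) := by
    rw [hxdef, map_sum, LinearMap.sum_apply]
    simp only [map_smul, LinearMap.smul_apply]
    rw [Finset.sum_eq_single jm (fun k _ hkj => by
      rw [hnat _ _ (fun hh => hkj (Fin.ext (show (k : ℕ) = (jm : ℕ) by have hq' := congrArg Fin.val hh; exact hq'))),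
        smul_zero]) (by simp)]
  have hxk0 : ∀ k : Fin n, (jm : ℕ) < (k : ℕ) → μ x (b k) = 0 := by
    intro k hk
    rw [hxdef, map_sum, LinearMap.sum_apply]
    apply Finset.sum_eq_zero
    intro l _
    simp only [map_smul, LinearMap.smul_apply]
    by_cases hl : (l : ℕ) = (k : ℕ)
    · have hl0 : β l = 0 := by
        by_contra hl0
        have := hjmax l hl0
        rw [Fin.le_def] at this
        omega
      rw [hl0, zero_smul]
    · rw [hnat _ _ (fun hh => hl (by have hq' := congrArg Fin.val hh; exact hq')), smul_zero]
  have hsec : ∃ mk : Fin (n - 1), β mk ≠ 0 ∧ (mk : ℕ) < (jm : ℕ) := by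
    by_contra hcon
    push_neg at hcon
    have hall : ∀ k, k ≠ jm → β k = 0 := by
      intro k hk
      by_contra hk0
      have h1 := hjmax k hk0
      have h3 := hcon k hk0
      rw [Fin.le_def] at h1
      exact hk (Fin.ext (by omega))
    have hs : ∑ j : Fin (n - 1), (β j * β j) • μ (b ⟨j.1, hlt j⟩) (b ⟨j.1, hlt j⟩) = 0 := by
      rw [← hexp]
      exact hxx
    rw [Finset.sum_eq_single jm (fun k _ hkj => by rw [hall k hkj, zero_mul, zero_smul])
      (by simp)] at hs
    rcases smul_eq_zero.1 hs with h | h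
    · exact hjβ (mul_self_eq_zero.1 h)
    · exact hsq_ne h
  obtain ⟨mk, hmkβ, hmkj⟩ := hsec
  set tc : K := (2 * β jm)⁻¹ with htc
  have h2b : 2 * β jm ≠ 0 := mul_ne_zero h2 hjβ
  set v : E := b ⟨jm.1, hlt jm⟩ - tc • x with hvdef
  have hbx : μ (b ⟨jm.1, hlt jm⟩) x = β jm • μ (b ⟨jm.1, hlt jm⟩) (b ⟨jm.1, hlt jm⟩) := by
    rw [hcomm (b ⟨jm.1, hlt jm⟩) x, hxbj]
  have htb : tc * β jm = 2⁻¹ := by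
    rw [htc, mul_inv]
    rw [mul_assoc, inv_mul_cancel₀ hjβ, mul_one]
  have hvv : μ v v = 0 := by
    rw [hvdef]
    simp only [map_sub, map_smul, LinearMap.sub_apply, LinearMap.smul_apply]
    rw [hxx, hbx, hxbj, smul_zero, sub_zero, smul_smul, htb]
    nth_rewrite 1 [← one_smul K (μ (b ⟨jm.1, hlt jm⟩) (b ⟨jm.1, hlt jm⟩))]
    rw [← sub_smul, ← sub_smul]
    rw [show (1 : K) - 2⁻¹ - 2⁻¹ = 0 by
      have h21 : (2 : K)⁻¹ + 2⁻¹ = 1 := by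
        rw [← two_mul, mul_inv_cancel₀ h2]
      linear_combination (-1 : K) * h21]
    rw [zero_smul]
  set U : Submodule K E := span K {x} with hU
  set V : Submodule K E := span K {v} with hVd
  set W : Submodule K E := span K ({x} ∪ (b '' {k : Fin n | (jm : ℕ) < (k : ℕ)})) with hWd
  have hUsub : IsSubalg μ U := by
    rw [hU]
    apply isSubalg_span
    intro a ha c hc
    rw [Set.mem_singleton_iff] at ha hc
    subst ha; subst hc
    rw [hxx]
    exact Submodule.zero_mem _
  have hVsub : IsSubalg μ V := by
    rw [hVd]
    apply isSubalg_span
    intro a ha c hc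
    rw [Set.mem_singleton_iff] at ha hc
    subst ha; subst hc
    rw [hvv]
    exact Submodule.zero_mem _
  have hsqW : ∀ k : Fin n, (jm : ℕ) ≤ (k : ℕ) → μ (b k) (b k) ∈ W := by
    intro k hk
    rw [hWd]
    rw [← b.sum_repr (μ (b k) (b k))]
    apply Submodule.sum_mem
    intro c _
    by_cases hc : (k : ℕ) < (c : ℕ)
    · refine Submodule.smul_mem _ _ (Submodule.subset_span (Or.inr ⟨c, ?_, rfl⟩))
      show (jm : ℕ) < (c : ℕ)
      omega
    · rw [hupper k c (Fin.le_def.2 (by omega)), zero_smul]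
      exact Submodule.zero_mem _
  have hWsub : IsSubalg μ W := by
    rw [hWd]
    apply isSubalg_span
    rintro a ha c hc
    rcases ha with ha | ⟨k, hk, rfl⟩
    · rw [Set.mem_singleton_iff] at ha
      subst ha
      rcases hc with hc | ⟨l, hl, rfl⟩
      · rw [Set.mem_singleton_iff] at hc
        subst hc
        rw [hxx]
        exact Submodule.zero_mem _
      · rw [hxk0 l hl]
        exact Submodule.zero_mem _
    · rcases hc with hc | ⟨l, hl, rfl⟩
      · rw [Set.mem_singleton_iff] at hc
        subst hc
        rw [hcomm (b k) x, hxk0 k hk]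
        exact Submodule.zero_mem _
      · by_cases hkl : k = l
        · subst hkl
          have := hsqW k (le_of_lt hk)
          rw [hWd] at this
          exact this
        · rw [hnat k l hkl]
          exact Submodule.zero_mem _
  have hUW : U ≤ W := by
    rw [hU, hWd]
    exact Submodule.span_mono Set.subset_union_left
  have hreprx : ∀ c : Fin (n - 1), b.repr x ⟨c.1, hlt c⟩ = β c := by
    intro c
    rw [hxdef, map_sum, Finsupp.finset_sum_apply]
    simp only [map_smul, Finsupp.smul_apply, Module.Basis.repr_self, smul_eq_mul]
    rw [Finset.sum_eq_single c (fun l _ hlc => by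
      rw [Finsupp.single_eq_of_ne' (fun hh => hlc (Fin.ext
        (by have hq' := congrArg Fin.val hh; exact hq'))), mul_zero]) (by simp)]
    rw [Finsupp.single_eq_same, mul_one]
  have hqrep : ∀ q ∈ span K (b '' {k : Fin n | (jm : ℕ) < (k : ℕ)}),
      ∀ c : Fin n, (c : ℕ) ≤ (jm : ℕ) → b.repr q c = 0 := by
    intro q hq
    induction hq using Submodule.span_induction with
    | mem z hz =>
      obtain ⟨k, hk, rfl⟩ := hz
      intro c hc
      rw [Module.Basis.repr_self]
      refine Finsupp.single_eq_of_ne (fun hh => ?_)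
      have hq' := congrArg Fin.val hh
      have hk' : (jm : ℕ) < (k : ℕ) := hk
      omega
    | zero => intro c _; simp
    | add y z _ _ hy hz => intro c hc; rw [map_add, Finsupp.add_apply, hy c hc, hz c hc, add_zero]
    | smul a y _ hy => intro c hc; rw [map_smul, Finsupp.smul_apply, hy c hc, smul_zero]
  have hvnW : v ∉ W := by
    intro hvW
    rw [hWd, Submodule.span_union] at hvW
    obtain ⟨p, hp, q, hq, hpq⟩ := Submodule.mem_sup.1 hvW
    obtain ⟨a, rfl⟩ := Submodule.mem_span_singleton.1 hp
    have e1 : b.repr v ⟨mk.1, hlt mk⟩ = -(tc * β mk) := by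
      rw [hvdef, map_sub, Finsupp.sub_apply, map_smul, Finsupp.smul_apply, smul_eq_mul,
        hreprx mk, Module.Basis.repr_self,
        Finsupp.single_eq_of_ne' (fun hh => by
          have hq' := congrArg Fin.val hh
          have hq'' : (jm : ℕ) = (mk : ℕ) := hq'
          omega)]
      ring
    have e2 : b.repr v ⟨mk.1, hlt mk⟩ = a * β mk := by
      rw [← hpq, map_add, Finsupp.add_apply, map_smul, Finsupp.smul_apply, smul_eq_mul,
        hreprx mk, hqrep q hq ⟨mk.1, hlt mk⟩ (by show (mk : ℕ) ≤ (jm : ℕ); omega), add_zero]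
    have e3 : b.repr v ⟨jm.1, hlt jm⟩ = 1 - tc * β jm := by
      rw [hvdef, map_sub, Finsupp.sub_apply, map_smul, Finsupp.smul_apply, smul_eq_mul,
        hreprx jm, Module.Basis.repr_self, Finsupp.single_eq_same]
    have e4 : b.repr v ⟨jm.1, hlt jm⟩ = a * β jm := by
      rw [← hpq, map_add, Finsupp.add_apply, map_smul, Finsupp.smul_apply, smul_eq_mul,
        hreprx jm, hqrep q hq ⟨jm.1, hlt jm⟩ (le_refl _), add_zero]
    have ea : a = -tc := by
      have h5 := e1.symm.trans e2
      have h6 : (-tc) * β mk = a * β mk := by rw [neg_mul]; exact h5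
      exact (mul_right_cancel₀ hmkβ h6).symm
    have h7 := e3.symm.trans e4
    rw [ea] at h7
    have h8 : (1 : K) = 0 := by linear_combination h7
    exact one_ne_zero h8
  have hVWbot : V ⊓ W = ⊥ := by
    rw [eq_bot_iff]
    intro z hz
    obtain ⟨hzV, hzW⟩ := Submodule.mem_inf.1 hz
    obtain ⟨cc, rfl⟩ := Submodule.mem_span_singleton.1 hzV
    by_cases hcc : cc = 0
    · rw [hcc, zero_smul]
      exact Submodule.zero_mem ⊥
    · exfalso
      apply hvnW
      have hmem := Submodule.smul_mem W cc⁻¹ hzW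
      rwa [smul_smul, inv_mul_cancel₀ hcc, one_smul] at hmem
  have hgenbot : gen μ (↑U ∪ ↑(V ⊓ W)) = U := by
    rw [hVWbot]
    apply le_antisymm
    · refine sInf_le ⟨hUsub, Set.union_subset (fun z hz => hz) ?_⟩
      intro z hz
      have hz0 : z = (0 : E) := (Submodule.mem_bot K).1 hz
      rw [hz0]
      exact Submodule.zero_mem U
    · refine le_sInf ?_
      rintro W' ⟨hW'1, hW'2⟩
      intro z hz
      exact hW'2 (Or.inl hz)
  have hw0gen : μ (b ⟨jm.1, hlt jm⟩) (b ⟨jm.1, hlt jm⟩) ∈ gen μ (↑U ∪ ↑V) := by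
    apply Submodule.mem_sInf.2
    rintro W' ⟨hW's, hW'c⟩
    have hxW' : x ∈ W' := hW'c (Or.inl (Submodule.mem_span_singleton_self x))
    have hvW' : v ∈ W' := hW'c (Or.inr (Submodule.mem_span_singleton_self v))
    have hμ : μ v x ∈ W' := hW's v hvW' x hxW'
    have hμval : μ v x = β jm • μ (b ⟨jm.1, hlt jm⟩) (b ⟨jm.1, hlt jm⟩) := by
      rw [hvdef, map_sub, LinearMap.sub_apply, map_smul, LinearMap.smul_apply, hxx, smul_zero,
        sub_zero, hbx]
    rw [hμval] at hμ
    have hmem := Submodule.smul_mem W' (β jm)⁻¹ hμ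
    rwa [smul_smul, inv_mul_cancel₀ hjβ, one_smul] at hmem
  have hw0U : μ (b ⟨jm.1, hlt jm⟩) (b ⟨jm.1, hlt jm⟩) ∉ U := by
    intro hmem
    rw [hU] at hmem
    obtain ⟨cc, hcc⟩ := Submodule.mem_span_singleton.1 hmem
    have h6 : b.repr (μ (b ⟨jm.1, hlt jm⟩) (b ⟨jm.1, hlt jm⟩)) ⟨jm.1, hlt jm⟩ = 0 :=
      hupper _ _ (le_refl _)
    rw [← hcc, map_smul, Finsupp.smul_apply, smul_eq_mul, hreprx jm] at h6
    rcases mul_eq_zero.1 h6 with h | h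
    · rw [h, zero_smul] at hcc
      exact hsq_ne hcc.symm
    · exact hjβ h
  constructor
  · refine ⟨α, hα0, hsum, β, hβ, hxx, b ⟨jm.1, hlt jm⟩, ?_⟩
    rw [hxbj]
    exact smul_ne_zero hjβ hsq_ne
  · intro hM
    have heq := hM U V W hUsub hVsub hWsub hUW
    rw [hgenbot] at heq
    have hmem : μ (b ⟨jm.1, hlt jm⟩) (b ⟨jm.1, hlt jm⟩) ∈ U := by
      rw [heq]
      exact Submodule.mem_inf.2 ⟨hw0gen, hsqW ⟨jm.1, hlt jm⟩ (le_refl _)⟩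
    exact hw0U hmem
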